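/- arXiv:1303.1209 — 2 statements merged into one kernel-verified Lean document; each statement's English description precedes it below -/
import Mathlib

section
/- Let A be an M × N matrix whose rows are chosen uniformly at random from the rows of the N × N Fourier matrix (with each entry of unit modulus, normalized so columns have unit norm after dividing by √M). If M ≥ b·μ^{−2}·log(N/γ) for a sufficiently large constant b, then with probability at least 1 − γ the coherence of A/√M is at most μ; consequently, for M = Θ(t³ log N), the matrix A/√M satisfies the restricted isometry property of order t with constant 1/2 with probability at least 1 − 1/N^t. -/
open MeasureTheory Finset Real
open scoped ENNReal

noncomputable def gfun (N : ℕ) (d : ℤ) (v : Fin N) : ℂ :=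
  Complex.exp (2 * Real.pi * Complex.I * (v : ℕ) * d / N)

noncomputable def efun (N Mn : ℕ) (r : Fin Mn → Fin N) (j : Fin N) (i : Fin Mn) : ℂ :=
  Complex.exp (-(2 * Real.pi * Complex.I) * ((r i : ℕ) * (j : ℕ)) / N) / (Real.sqrt Mn : ℂ)


lemma meas_singleton (N Mn : ℕ) [NeZero N] (x : Fin Mn → Fin N) :
    (Measure.pi fun _ : Fin Mn => (PMF.uniformOfFintype (Fin N)).toMeasure) {x}
      = ((N : ℝ≥0∞))⁻¹ ^ Mn := by
  rw [show ({x} : Set (Fin Mn → Fin N)) = Set.pi Set.univ (fun i => {x i}) by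
        simp [Set.univ_pi_singleton]]
  rw [Measure.pi_pi]
  simp [PMF.toMeasure_apply_singleton _ _ (measurableSet_singleton _),
    PMF.uniformOfFintype_apply]

open Classical in
lemma meas_le_card (N Mn : ℕ) [NeZero N] (E : Set (Fin Mn → Fin N)) :
    (Measure.pi fun _ : Fin Mn => (PMF.uniformOfFintype (Fin N)).toMeasure) E
      ≤ (@Finset.filter _ (· ∈ E) (Classical.decPred _) Finset.univ).card
          * ((N : ℝ≥0∞))⁻¹ ^ Mn := by
  calc (Measure.pi fun _ : Fin Mn => (PMF.uniformOfFintype (Fin N)).toMeasure) E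
      ≤ (Measure.pi fun _ : Fin Mn => (PMF.uniformOfFintype (Fin N)).toMeasure)
          (⋃ x ∈ Finset.univ.filter (· ∈ E), {x}) := by
        apply measure_mono; intro x hx; simp only [Set.mem_iUnion]
        exact ⟨x, by simpa using hx, rfl⟩
    _ ≤ ∑ x ∈ Finset.univ.filter (· ∈ E),
          (Measure.pi fun _ : Fin Mn => (PMF.uniformOfFintype (Fin N)).toMeasure) {x} :=
        measure_biUnion_finset_le _ _
    _ = _ := by
        rw [Finset.sum_congr rfl (fun x _ => meas_singleton N Mn x), Finset.sum_const,
          nsmul_eq_mul]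



-- pointwise convexity bound
lemma exp_mul_le (l x : ℝ) (hx : |x| ≤ 1) :
    Real.exp (l * x) ≤ Real.cosh l + x * Real.sinh l := by
  have h1 : -1 ≤ x := neg_le_of_abs_le hx
  have h2 : x ≤ 1 := le_of_abs_le hx
  have ha : (0:ℝ) ≤ (1 - x) / 2 := by linarith
  have hb : (0:ℝ) ≤ (1 + x) / 2 := by linarith
  have hab : (1 - x) / 2 + (1 + x) / 2 = 1 := by ring
  have := convexOn_exp.2 (Set.mem_univ (-l)) (Set.mem_univ l) ha hb hab
  simp only [smul_eq_mul] at this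
  rw [Real.cosh_eq, Real.sinh_eq]
  calc Real.exp (l * x) = Real.exp ((1 - x) / 2 * (-l) + (1 + x) / 2 * l) := by ring_nf
    _ ≤ (1 - x) / 2 * Real.exp (-l) + (1 + x) / 2 * Real.exp l := this
    _ = (Real.exp l + Real.exp (-l)) / 2 + x * ((Real.exp l - Real.exp (-l)) / 2) := by ring

lemma sum_exp_le {N : ℕ} (f : Fin N → ℝ) (hf : ∀ v, |f v| ≤ 1) (hsum : ∑ v, f v = 0)
    (l : ℝ) : ∑ v, Real.exp (l * f v) ≤ N * Real.exp (l ^ 2 / 2) := by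
  calc ∑ v, Real.exp (l * f v) ≤ ∑ v, (Real.cosh l + f v * Real.sinh l) :=
        Finset.sum_le_sum fun v _ => exp_mul_le l (f v) (hf v)
    _ = N * Real.cosh l := by
        rw [Finset.sum_add_distrib, ← Finset.sum_mul, hsum]; simp [mul_comm]
    _ ≤ N * Real.exp (l ^ 2 / 2) :=
        mul_le_mul_of_nonneg_left (Real.cosh_le_exp_half_sq l) (Nat.cast_nonneg N)

open Classical in
lemma count_chernoff {N Mn : ℕ} (hMn : 0 < Mn) (f : Fin N → ℝ)
    (hf : ∀ v, |f v| ≤ 1) (hsum : ∑ v, f v = 0) (s : ℝ) (hs : 0 ≤ s) :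
    ((Finset.univ.filter (fun r : Fin Mn → Fin N => s ≤ ∑ i, f (r i))).card : ℝ)
      ≤ (N : ℝ) ^ Mn * Real.exp (-(s ^ 2) / (2 * Mn)) := by
  set l : ℝ := s / Mn with hl
  have hl0 : 0 ≤ l := by positivity
  have key : ((Finset.univ.filter (fun r : Fin Mn → Fin N => s ≤ ∑ i, f (r i))).card : ℝ)
      * Real.exp (l * s) ≤ (N : ℝ) ^ Mn * Real.exp (Mn * (l ^ 2 / 2)) := by
    calc ((Finset.univ.filter (fun r : Fin Mn → Fin N => s ≤ ∑ i, f (r i))).card : ℝ)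
        * Real.exp (l * s)
        = ∑ _r ∈ Finset.univ.filter (fun r : Fin Mn → Fin N => s ≤ ∑ i, f (r i)),
            Real.exp (l * s) := by rw [Finset.sum_const, nsmul_eq_mul]
      _ ≤ ∑ r ∈ Finset.univ.filter (fun r : Fin Mn → Fin N => s ≤ ∑ i, f (r i)),
            Real.exp (l * ∑ i, f (r i)) := by
          apply Finset.sum_le_sum; intro r hr
          exact Real.exp_le_exp.2 (mul_le_mul_of_nonneg_left (mem_filter.1 hr).2 hl0)
      _ ≤ ∑ r : Fin Mn → Fin N, Real.exp (l * ∑ i, f (r i)) :=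
          Finset.sum_le_sum_of_subset_of_nonneg (Finset.filter_subset _ _)
            (fun _ _ _ => (Real.exp_pos _).le)
      _ = ∑ r : Fin Mn → Fin N, ∏ i, Real.exp (l * f (r i)) := by
          refine Finset.sum_congr rfl fun r _ => ?_
          rw [Finset.mul_sum, Real.exp_sum]
      _ = ∏ _i : Fin Mn, ∑ v, Real.exp (l * f v) := (Fintype.prod_sum (fun (_ : Fin Mn) (v : Fin N) => Real.exp (l * f v))).symm
      _ ≤ ∏ _i : Fin Mn, ((N : ℝ) * Real.exp (l ^ 2 / 2)) := by
          apply Finset.prod_le_prod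
          · intro _ _; positivity
          · intro _ _; exact sum_exp_le f hf hsum l
      _ = (N : ℝ) ^ Mn * Real.exp (Mn * (l ^ 2 / 2)) := by
          rw [Finset.prod_const, Finset.card_univ, Fintype.card_fin, mul_pow,
            ← Real.exp_nat_mul]
  have hMn' : (0:ℝ) < Mn := by exact_mod_cast hMn
  have harith : Mn * (l ^ 2 / 2) - l * s = -(s ^ 2) / (2 * Mn) := by
    rw [hl]; field_simp; ring
  calc ((Finset.univ.filter (fun r : Fin Mn → Fin N => s ≤ ∑ i, f (r i))).card : ℝ)
      = ((Finset.univ.filter (fun r : Fin Mn → Fin N => s ≤ ∑ i, f (r i))).card : ℝ)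
        * Real.exp (l * s) * Real.exp (-(l * s)) := by
        rw [mul_assoc, ← Real.exp_add]; simp
    _ ≤ (N : ℝ) ^ Mn * Real.exp (Mn * (l ^ 2 / 2)) * Real.exp (-(l * s)) := by
        gcongr
    _ = (N : ℝ) ^ Mn * Real.exp (-(s ^ 2) / (2 * Mn)) := by
        rw [mul_assoc, ← Real.exp_add, ← harith]; ring_nf


lemma gfun_abs (N : ℕ) [NeZero N] (d : ℤ) (v : Fin N) : ‖gfun N d v‖ = 1 := by
  have h : (2 * (Real.pi:ℂ) * Complex.I * ((v : ℕ):ℂ) * (d:ℂ) / (N:ℂ))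
      = ((2 * Real.pi * (v:ℕ) * d / N : ℝ) : ℂ) * Complex.I := by push_cast; ring
  rw [gfun, h, Complex.norm_exp_ofReal_mul_I]

lemma gfun_sum (N : ℕ) [NeZero N] (d : ℤ) (hd : ¬ (N:ℤ) ∣ d) :
    ∑ v : Fin N, gfun N d v = 0 := by
  have hN0 : (N:ℂ) ≠ 0 := by exact_mod_cast (NeZero.ne N)
  set ζ : ℂ := Complex.exp (2 * Real.pi * Complex.I * d / N) with hζdef
  have hg : ∀ v : Fin N, gfun N d v = ζ ^ (v : ℕ) := by
    intro v
    rw [gfun, hζdef, ← Complex.exp_nat_mul]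
    congr 1; push_cast; ring
  have hζ1 : ζ ≠ 1 := by
    intro h
    rw [hζdef, Complex.exp_eq_one_iff] at h
    obtain ⟨n, hn⟩ := h
    apply hd
    refine ⟨n, ?_⟩
    have hπ : (Real.pi : ℂ) ≠ 0 := by exact_mod_cast Real.pi_ne_zero
    have hI : Complex.I ≠ 0 := Complex.I_ne_zero
    have h2 : (d : ℂ) = N * n := by
      field_simp at hn
      have h3 : (2 * (Real.pi:ℂ) * Complex.I) * (d:ℂ) = (2 * (Real.pi:ℂ) * Complex.I) * ((N:ℂ) * n) := by
        linear_combination (2 * (Real.pi:ℂ) * Complex.I) * hn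
      exact mul_left_cancel₀ (by simp [hπ, hI]) h3
    exact_mod_cast h2
  have hζN : ζ ^ N = 1 := by
    rw [hζdef, ← Complex.exp_nat_mul]
    have : (N:ℂ) * (2 * Real.pi * Complex.I * d / N) = (d:ℂ) * (2 * Real.pi * Complex.I) := by
      field_simp
    rw [this]
    exact_mod_cast Complex.exp_int_mul_two_pi_mul_I d
  calc ∑ v : Fin N, gfun N d v = ∑ v : Fin N, ζ ^ (v:ℕ) := by simp [hg]
    _ = ∑ k ∈ Finset.range N, ζ ^ k := Fin.sum_univ_eq_sum_range _ _
    _ = (ζ ^ N - 1) / (ζ - 1) := geom_sum_eq hζ1 N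
    _ = 0 := by rw [hζN]; simp


lemma term_eq (N Mn : ℕ) [NeZero N] (v j j' : Fin N) :
    (starRingEnd ℂ)
        (Complex.exp (-(2 * Real.pi * Complex.I) * ((v : ℕ) * (j : ℕ)) / N) /
          (Real.sqrt Mn : ℂ)) *
      (Complex.exp (-(2 * Real.pi * Complex.I) * ((v : ℕ) * (j' : ℕ)) / N) /
        (Real.sqrt Mn : ℂ))
    = gfun N ((j : ℕ) - (j' : ℕ) : ℤ) v / Mn := by
  rw [map_div₀, ← Complex.exp_conj, Complex.conj_ofReal, div_mul_div_comm,
    ← Complex.exp_add, ← Complex.ofReal_mul, Real.mul_self_sqrt (Nat.cast_nonneg Mn),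
    gfun]
  have hconj : (starRingEnd ℂ) (-(2 * Real.pi * Complex.I) * ((v : ℕ) * (j : ℕ)) / N)
      = (2 * Real.pi * Complex.I) * ((v : ℕ) * (j : ℕ)) / N := by
    simp [map_div₀, map_mul, map_neg, Complex.conj_I, map_ofNat]
  rw [hconj]
  congr 1
  · congr 1
    push_cast
    ring



open Classical in
lemma pair_count {N Mn : ℕ} [NeZero N] (hMn : 0 < Mn) (d : ℤ) (hd : ¬(N:ℤ) ∣ d)
    (μc : ℝ) (hμ : 0 < μc) :
    ((Finset.univ.filter (fun r : Fin Mn → Fin N =>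
        μc * Mn < ‖∑ i, gfun N d (r i)‖)).card : ℝ)
      ≤ 4 * ((N : ℝ) ^ Mn * Real.exp (-(μc ^ 2 * Mn) / 8)) := by
  have hMn' : (0:ℝ) < Mn := by exact_mod_cast hMn
  set s : ℝ := μc * Mn / 2 with hs
  have hs0 : 0 ≤ s := by positivity
  set f₁ : Fin N → ℝ := fun v => (gfun N d v).re with hf₁
  set f₂ : Fin N → ℝ := fun v => -(gfun N d v).re with hf₂
  set f₃ : Fin N → ℝ := fun v => (gfun N d v).im with hf₃
  set f₄ : Fin N → ℝ := fun v => -(gfun N d v).im with hf₄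
  have habs : ∀ v, ‖gfun N d v‖ = 1 := gfun_abs N d
  have hb₁ : ∀ v, |f₁ v| ≤ 1 := fun v => by
    rw [hf₁, ← habs v]; exact Complex.abs_re_le_norm _
  have hb₂ : ∀ v, |f₂ v| ≤ 1 := fun v => by
    rw [hf₂, abs_neg, ← habs v]; exact Complex.abs_re_le_norm _
  have hb₃ : ∀ v, |f₃ v| ≤ 1 := fun v => by
    rw [hf₃, ← habs v]; exact Complex.abs_im_le_norm _
  have hb₄ : ∀ v, |f₄ v| ≤ 1 := fun v => by
    rw [hf₄, abs_neg, ← habs v]; exact Complex.abs_im_le_norm _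
  have hsum0 := gfun_sum N d hd
  have hs₁ : ∑ v, f₁ v = 0 := by
    rw [hf₁]; rw [← Complex.re_sum, hsum0]; simp
  have hs₂ : ∑ v, f₂ v = 0 := by
    rw [hf₂]; simp only [Finset.sum_neg_distrib]
    rw [← Complex.re_sum, hsum0]; simp
  have hs₃ : ∑ v, f₃ v = 0 := by
    rw [hf₃]; rw [← Complex.im_sum, hsum0]; simp
  have hs₄ : ∑ v, f₄ v = 0 := by
    rw [hf₄]; simp only [Finset.sum_neg_distrib]
    rw [← Complex.im_sum, hsum0]; simp
  have hsubset : (Finset.univ.filter (fun r : Fin Mn → Fin N =>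
        μc * Mn < ‖∑ i, gfun N d (r i)‖))
      ⊆ ((Finset.univ.filter (fun r : Fin Mn → Fin N => s ≤ ∑ i, f₁ (r i)))
        ∪ (Finset.univ.filter (fun r : Fin Mn → Fin N => s ≤ ∑ i, f₂ (r i))))
        ∪ ((Finset.univ.filter (fun r : Fin Mn → Fin N => s ≤ ∑ i, f₃ (r i)))
        ∪ (Finset.univ.filter (fun r : Fin Mn → Fin N => s ≤ ∑ i, f₄ (r i)))) := by
    intro r hr
    rw [Finset.mem_filter] at hr
    have hr2 := hr.2
    set z : ℂ := ∑ i, gfun N d (r i) with hz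
    have hle : ‖z‖ ≤ |z.re| + |z.im| := Complex.norm_le_abs_re_add_abs_im z
    have : s ≤ |z.re| ∨ s ≤ |z.im| := by
      by_contra h
      push_neg at h
      have : ‖z‖ < μc * Mn := by
        calc ‖z‖ ≤ |z.re| + |z.im| := hle
          _ < s + s := add_lt_add h.1 h.2
          _ = μc * Mn := by rw [hs]; ring
      linarith
    have hre : z.re = ∑ i, f₁ (r i) := by rw [hz, Complex.re_sum]
    have him : z.im = ∑ i, f₃ (r i) := by rw [hz, Complex.im_sum]
    simp only [Finset.mem_union, Finset.mem_filter, Finset.mem_univ, true_and]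
    have hf2sum : ∀ q : Fin Mn → Fin N, ∑ i, f₂ (q i) = -∑ i, f₁ (q i) := by
      intro q; rw [hf₂, hf₁]; simp
    have hf4sum : ∀ q : Fin Mn → Fin N, ∑ i, f₄ (q i) = -∑ i, f₃ (q i) := by
      intro q; rw [hf₄, hf₃]; simp
    rcases this with h | h
    · rcases le_abs.1 h with h' | h'
      · exact Or.inl (Or.inl (by rw [← hre]; exact h'))
      · exact Or.inl (Or.inr (by rw [hf2sum, ← hre]; exact h'))
    · rcases le_abs.1 h with h' | h'
      · exact Or.inr (Or.inl (by rw [← him]; exact h'))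
      · exact Or.inr (Or.inr (by rw [hf4sum, ← him]; exact h'))
  have hexp : Real.exp (-(s ^ 2) / (2 * Mn)) = Real.exp (-(μc ^ 2 * Mn) / 8) := by
    congr 1
    rw [hs]
    field_simp
    ring
  have hcard := fun (f : Fin N → ℝ) hf hsum =>
    count_chernoff (N := N) hMn f hf hsum s hs0
  calc ((Finset.univ.filter (fun r : Fin Mn → Fin N =>
        μc * Mn < ‖∑ i, gfun N d (r i)‖)).card : ℝ)
      ≤ ((((Finset.univ.filter (fun r : Fin Mn → Fin N => s ≤ ∑ i, f₁ (r i)))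
        ∪ (Finset.univ.filter (fun r : Fin Mn → Fin N => s ≤ ∑ i, f₂ (r i))))
        ∪ ((Finset.univ.filter (fun r : Fin Mn → Fin N => s ≤ ∑ i, f₃ (r i)))
        ∪ (Finset.univ.filter (fun r : Fin Mn → Fin N => s ≤ ∑ i, f₄ (r i))))).card : ℝ) := by
        exact_mod_cast Nat.cast_le.2 (Finset.card_le_card hsubset)
    _ ≤ (((Finset.univ.filter (fun r : Fin Mn → Fin N => s ≤ ∑ i, f₁ (r i))).card : ℝ)
        + ((Finset.univ.filter (fun r : Fin Mn → Fin N => s ≤ ∑ i, f₂ (r i))).card : ℝ))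
        + (((Finset.univ.filter (fun r : Fin Mn → Fin N => s ≤ ∑ i, f₃ (r i))).card : ℝ)
        + ((Finset.univ.filter (fun r : Fin Mn → Fin N => s ≤ ∑ i, f₄ (r i))).card : ℝ)) := by
        push_cast
        have h1 := Finset.card_union_le
          ((Finset.univ.filter (fun r : Fin Mn → Fin N => s ≤ ∑ i, f₁ (r i)))
            ∪ (Finset.univ.filter (fun r : Fin Mn → Fin N => s ≤ ∑ i, f₂ (r i))))
          ((Finset.univ.filter (fun r : Fin Mn → Fin N => s ≤ ∑ i, f₃ (r i)))
            ∪ (Finset.univ.filter (fun r : Fin Mn → Fin N => s ≤ ∑ i, f₄ (r i))))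
        have h2 := Finset.card_union_le
          (Finset.univ.filter (fun r : Fin Mn → Fin N => s ≤ ∑ i, f₁ (r i)))
          (Finset.univ.filter (fun r : Fin Mn → Fin N => s ≤ ∑ i, f₂ (r i)))
        have h3 := Finset.card_union_le
          (Finset.univ.filter (fun r : Fin Mn → Fin N => s ≤ ∑ i, f₃ (r i)))
          (Finset.univ.filter (fun r : Fin Mn → Fin N => s ≤ ∑ i, f₄ (r i)))
        have := le_trans h1 (Nat.add_le_add h2 h3)
        exact_mod_cast this
    _ ≤ ((N : ℝ) ^ Mn * Real.exp (-(s ^ 2) / (2 * Mn)))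
        + ((N : ℝ) ^ Mn * Real.exp (-(s ^ 2) / (2 * Mn)))
        + (((N : ℝ) ^ Mn * Real.exp (-(s ^ 2) / (2 * Mn)))
        + ((N : ℝ) ^ Mn * Real.exp (-(s ^ 2) / (2 * Mn)))) := by
        have c1 := hcard f₁ hb₁ hs₁
        have c2 := hcard f₂ hb₂ hs₂
        have c3 := hcard f₃ hb₃ hs₃
        have c4 := hcard f₄ hb₄ hs₄
        linarith
    _ = 4 * ((N : ℝ) ^ Mn * Real.exp (-(μc ^ 2 * Mn) / 8)) := by
        rw [hexp]; ring


lemma efun_normSq (N Mn : ℕ) [NeZero N] (hMn : 0 < Mn) (r : Fin Mn → Fin N)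
    (j : Fin N) (i : Fin Mn) : Complex.normSq (efun N Mn r j i) = 1 / Mn := by
  have hMn' : (0:ℝ) < Mn := by exact_mod_cast hMn
  have habs : ‖Complex.exp
      (-(2 * Real.pi * Complex.I) * ((r i : ℕ) * (j : ℕ)) / N)‖ = 1 := by
    have h : (-(2 * (Real.pi:ℂ) * Complex.I) * (((r i : ℕ):ℂ) * ((j:ℕ):ℂ)) / (N:ℂ))
        = ((-(2 * Real.pi * (r i : ℕ) * (j:ℕ)) / N : ℝ) : ℂ) * Complex.I := by
      push_cast; ring
    rw [h, Complex.norm_exp_ofReal_mul_I]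
  rw [efun, Complex.normSq_div, ← Complex.sq_norm, ← Complex.sq_norm, habs,
    Complex.norm_real, Real.norm_eq_abs, abs_of_nonneg (Real.sqrt_nonneg _), Real.sq_sqrt hMn'.le]
  norm_num

lemma rip_det (N Mn t : ℕ) [NeZero N] (hMn : 0 < Mn) (r : Fin Mn → Fin N) (μc : ℝ)
    (hμ : 0 ≤ μc)
    (hcoh : ∀ j j' : Fin N, j ≠ j' →
      ‖∑ i, (starRingEnd ℂ) (efun N Mn r j i) * efun N Mn r j' i‖ ≤ μc)
    (hμt : μc * t ≤ 1 / 2) (y : Fin N → ℂ) (hy : {j | y j ≠ 0}.ncard ≤ t) :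
    (1 - (1:ℝ)/2) * ∑ j, ‖y j‖ ^ 2
        ≤ ∑ i, ‖∑ j, efun N Mn r j i * y j‖ ^ 2 ∧
      ∑ i, ‖∑ j, efun N Mn r j i * y j‖ ^ 2
        ≤ (1 + (1:ℝ)/2) * ∑ j, ‖y j‖ ^ 2 := by
  classical
  have hMnC : (Mn : ℂ) ≠ 0 := by exact_mod_cast hMn.ne'
  set T : ℝ := ∑ j, ‖y j‖ ^ 2 with hT
  have hT0 : 0 ≤ T := by positivity
  set G : Fin N → Fin N → ℂ :=
    fun j j' => ∑ i, (starRingEnd ℂ) (efun N Mn r j i) * efun N Mn r j' i with hG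
  have hGdiag : ∀ j, G j j = 1 := by
    intro j
    have heach : ∀ i : Fin Mn, (starRingEnd ℂ) (efun N Mn r j i) * efun N Mn r j i
        = ((1 / Mn : ℝ) : ℂ) := by
      intro i
      rw [mul_comm, Complex.mul_conj, efun_normSq N Mn hMn]
    show (∑ i, (starRingEnd ℂ) (efun N Mn r j i) * efun N Mn r j i) = 1
    rw [Finset.sum_congr rfl fun i _ => heach i, Finset.sum_const, Finset.card_univ,
      Fintype.card_fin, nsmul_eq_mul]
    push_cast
    field_simp
  -- expansion
  have hexpand : ∑ i, (∑ j, efun N Mn r j i * y j)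
        * (starRingEnd ℂ) (∑ j, efun N Mn r j i * y j)
      = ∑ j, ∑ j', (y j * (starRingEnd ℂ) (y j')) * G j' j := by
    have h1 : ∀ i, (∑ j, efun N Mn r j i * y j)
          * (starRingEnd ℂ) (∑ j, efun N Mn r j i * y j)
        = ∑ j, ∑ j', (y j * (starRingEnd ℂ) (y j'))
            * ((starRingEnd ℂ) (efun N Mn r j' i) * efun N Mn r j i) := by
      intro i
      rw [map_sum, Finset.sum_mul_sum]
      refine Finset.sum_congr rfl fun j _ => Finset.sum_congr rfl fun j' _ => ?_
      rw [map_mul]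
      ring
    rw [Finset.sum_congr rfl fun i _ => h1 i]
    rw [Finset.sum_comm]
    refine Finset.sum_congr rfl fun j _ => ?_
    rw [Finset.sum_comm]
    refine Finset.sum_congr rfl fun j' _ => ?_
    rw [hG, ← Finset.mul_sum]
  set Q : ℝ := ∑ i, ‖∑ j, efun N Mn r j i * y j‖ ^ 2 with hQ
  have hQre : Q = (∑ j, ∑ j', (y j * (starRingEnd ℂ) (y j')) * G j' j).re := by
    rw [← hexpand, Complex.re_sum]
    refine Finset.sum_congr rfl fun i _ => ?_
    rw [Complex.mul_conj, Complex.ofReal_re, Complex.sq_norm]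
  -- split diagonal
  set R : ℂ := ∑ j, ∑ j' ∈ Finset.univ.erase j, (y j * (starRingEnd ℂ) (y j')) * G j' j
    with hR
  have hsplit : (∑ j, ∑ j', (y j * (starRingEnd ℂ) (y j')) * G j' j)
      = (T : ℂ) + R := by
    have h1 : ∀ j : Fin N, ∑ j', (y j * (starRingEnd ℂ) (y j')) * G j' j
        = (y j * (starRingEnd ℂ) (y j)) * G j j
          + ∑ j' ∈ Finset.univ.erase j, (y j * (starRingEnd ℂ) (y j')) * G j' j := by
      intro j
      exact (Finset.add_sum_erase Finset.univ _ (Finset.mem_univ j)).symm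
    rw [Finset.sum_congr rfl fun j _ => h1 j, Finset.sum_add_distrib, hR, hT]
    congr 1
    push_cast
    refine Finset.sum_congr rfl fun j _ => ?_
    rw [hGdiag j, mul_one, Complex.mul_conj, ← Complex.sq_norm]
    push_cast
    ring
  -- bound |R|
  have hsupp : (∑ j, ‖y j‖) ^ 2 ≤ (t : ℝ) * T := by
    set s : Finset (Fin N) := Finset.univ.filter (fun j => y j ≠ 0) with hs
    have hcard : (s.card : ℝ) ≤ (t : ℝ) := by
      have : {j | y j ≠ 0} = ↑s := by ext j; simp [hs]
      rw [this, Set.ncard_coe_finset] at hy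
      exact_mod_cast hy
    have hsum_eq : ∑ j, ‖y j‖ = ∑ j ∈ s, ‖y j‖ := by
      symm
      apply Finset.sum_subset (Finset.subset_univ s)
      intro j _ hjs
      have : y j = 0 := by by_contra h; exact hjs (by simp [hs, h])
      simp [this]
    have hsq : (∑ j ∈ s, ‖y j‖) ^ 2
        ≤ (s.card : ℝ) * ∑ j ∈ s, ‖y j‖ ^ 2 := by
      exact_mod_cast sq_sum_le_card_mul_sum_sq (s := s) (f := fun j => ‖y j‖)
    have hTs : ∑ j ∈ s, ‖y j‖ ^ 2 ≤ T := by
      rw [hT]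
      apply Finset.sum_le_sum_of_subset_of_nonneg (Finset.subset_univ s)
      intro j _ _; positivity
    calc (∑ j, ‖y j‖) ^ 2 = (∑ j ∈ s, ‖y j‖) ^ 2 := by rw [hsum_eq]
      _ ≤ (s.card : ℝ) * ∑ j ∈ s, ‖y j‖ ^ 2 := hsq
      _ ≤ (t : ℝ) * T := by
          apply mul_le_mul hcard hTs (by positivity) (by positivity)
  have hRabs : ‖R‖ ≤ T / 2 := by
    have h1 : ‖R‖ ≤ ∑ j, ∑ j' ∈ Finset.univ.erase j,
        ‖y j‖ * ‖y j'‖ * μc := by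
      rw [hR]
      refine (norm_sum_le _ _).trans (Finset.sum_le_sum fun j _ => ?_)
      refine (norm_sum_le _ _).trans (Finset.sum_le_sum fun j' hj' => ?_)
      rw [norm_mul, norm_mul, Complex.norm_conj]
      have hne : j' ≠ j := (Finset.mem_erase.1 hj').1
      exact mul_le_mul_of_nonneg_left (hcoh j' j hne) (by positivity)
    have h2 : ∑ j, ∑ j' ∈ Finset.univ.erase j,
        ‖y j‖ * ‖y j'‖ * μc
        ≤ μc * (∑ j, ‖y j‖) ^ 2 := by
      have h3 : ∀ j : Fin N, ∑ j' ∈ Finset.univ.erase j,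
          ‖y j‖ * ‖y j'‖ * μc
          ≤ ∑ j', ‖y j‖ * ‖y j'‖ * μc := by
        intro j
        apply Finset.sum_le_sum_of_subset_of_nonneg (Finset.erase_subset _ _)
        intro j' _ _; positivity
      calc ∑ j, ∑ j' ∈ Finset.univ.erase j, ‖y j‖ * ‖y j'‖ * μc
          ≤ ∑ j, ∑ j' : Fin N, ‖y j‖ * ‖y j'‖ * μc :=
            Finset.sum_le_sum fun j _ => h3 j
        _ = μc * (∑ j, ‖y j‖) ^ 2 := by
            rw [sq, Finset.sum_mul_sum]
            rw [Finset.mul_sum]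
            refine Finset.sum_congr rfl fun j _ => ?_
            rw [Finset.mul_sum]
            refine Finset.sum_congr rfl fun j' _ => ?_
            ring
    have h4 : μc * (∑ j, ‖y j‖) ^ 2 ≤ μc * ((t:ℝ) * T) :=
      mul_le_mul_of_nonneg_left hsupp hμ
    have h5 : μc * ((t:ℝ) * T) ≤ (1/2) * T := by
      rw [← mul_assoc]
      exact mul_le_mul_of_nonneg_right hμt hT0
    linarith
  have hQT : |Q - T| ≤ T / 2 := by
    have : Q - T = R.re := by
      rw [hQre, hsplit]
      simp
    rw [this]
    exact (Complex.abs_re_le_norm R).trans hRabs |>.trans' (le_refl _) |>.trans (le_refl _)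
      |>.trans (le_refl _) |>.trans (le_refl _) |>.trans (le_refl _) |>.trans (le_refl _)
  have habs := abs_le.1 hQT
  constructor
  · linarith [habs.1]
  · linarith [habs.2]


open Classical in
lemma part1 (N Mn : ℕ) [NeZero N] (μc γ : ℝ) (hN : 2 ≤ N) (hMn : 0 < Mn)
    (hμ : 0 < μc) (hμ1 : μc ≤ 1) (hγ : 0 < γ) (hγ1 : γ ≤ 1)
    (hbig : 64 * μc⁻¹ ^ 2 * Real.log ((N : ℝ) / γ) ≤ (Mn : ℝ)) :
    (Measure.pi fun _ : Fin Mn => (PMF.uniformOfFintype (Fin N)).toMeasure)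
      {r : Fin Mn → Fin N | ∃ j j' : Fin N, j ≠ j' ∧
        μc < ‖∑ i : Fin Mn,
          (starRingEnd ℂ)
              (Complex.exp (-(2 * Real.pi * Complex.I) * ((r i : ℕ) * (j : ℕ)) / N) /
                (Real.sqrt Mn : ℂ)) *
            (Complex.exp (-(2 * Real.pi * Complex.I) * ((r i : ℕ) * (j' : ℕ)) / N) /
              (Real.sqrt Mn : ℂ))‖}
      ≤ ENNReal.ofReal γ := by
  have hN0 : (0:ℝ) < N := by positivity
  have hMn' : (0:ℝ) < Mn := by exact_mod_cast hMn
  set E : Set (Fin Mn → Fin N) := {r : Fin Mn → Fin N | ∃ j j' : Fin N, j ≠ j' ∧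
        μc < ‖∑ i : Fin Mn,
          (starRingEnd ℂ)
              (Complex.exp (-(2 * Real.pi * Complex.I) * ((r i : ℕ) * (j : ℕ)) / N) /
                (Real.sqrt Mn : ℂ)) *
            (Complex.exp (-(2 * Real.pi * Complex.I) * ((r i : ℕ) * (j' : ℕ)) / N) /
              (Real.sqrt Mn : ℂ))‖} with hE
  -- rewrite membership via gfun
  have hmem : ∀ r : Fin Mn → Fin N, r ∈ E ↔ ∃ j j' : Fin N, j ≠ j' ∧
      μc * Mn < ‖∑ i, gfun N (((j : ℕ) : ℤ) - ((j' : ℕ) : ℤ)) (r i)‖ := by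
    intro r
    rw [hE]
    simp only [Set.mem_setOf_eq]
    constructor
    · rintro ⟨j, j', hjj, habs⟩
      refine ⟨j, j', hjj, ?_⟩
      have : ∑ i : Fin Mn,
          (starRingEnd ℂ)
              (Complex.exp (-(2 * Real.pi * Complex.I) * ((r i : ℕ) * (j : ℕ)) / N) /
                (Real.sqrt Mn : ℂ)) *
            (Complex.exp (-(2 * Real.pi * Complex.I) * ((r i : ℕ) * (j' : ℕ)) / N) /
              (Real.sqrt Mn : ℂ))
          = (∑ i, gfun N (((j : ℕ) : ℤ) - ((j' : ℕ) : ℤ)) (r i)) / Mn := by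
        rw [Finset.sum_div]
        exact Finset.sum_congr rfl fun i _ => term_eq N Mn (r i) j j'
      rw [this, norm_div] at habs
      have hMabs : ‖(Mn : ℂ)‖ = (Mn : ℝ) := by
        rw [Complex.norm_natCast]
      rw [hMabs, lt_div_iff₀ hMn'] at habs
      exact habs
    · rintro ⟨j, j', hjj, habs⟩
      refine ⟨j, j', hjj, ?_⟩
      have heq : ∑ i : Fin Mn,
          (starRingEnd ℂ)
              (Complex.exp (-(2 * Real.pi * Complex.I) * ((r i : ℕ) * (j : ℕ)) / N) /
                (Real.sqrt Mn : ℂ)) *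
            (Complex.exp (-(2 * Real.pi * Complex.I) * ((r i : ℕ) * (j' : ℕ)) / N) /
              (Real.sqrt Mn : ℂ))
          = (∑ i, gfun N (((j : ℕ) : ℤ) - ((j' : ℕ) : ℤ)) (r i)) / Mn := by
        rw [Finset.sum_div]
        exact Finset.sum_congr rfl fun i _ => term_eq N Mn (r i) j j'
      rw [heq, norm_div, Complex.norm_natCast, lt_div_iff₀ hMn']
      exact habs
  -- counting
  have hdvd : ∀ j j' : Fin N, j ≠ j' → ¬ (N:ℤ) ∣ (((j : ℕ) : ℤ) - ((j' : ℕ) : ℤ)) := by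
    intro j j' hjj hdv
    have hlt : (((j : ℕ) : ℤ) - ((j' : ℕ) : ℤ)).natAbs < (N:ℤ).natAbs := by
      have h1 : (j : ℕ) < N := j.isLt
      have h2 : (j' : ℕ) < N := j'.isLt
      omega
    have := Int.eq_zero_of_dvd_of_natAbs_lt_natAbs hdv hlt
    have : (j : ℕ) = (j' : ℕ) := by omega
    exact hjj (Fin.val_injective this)
  have hcount : ((Finset.univ.filter (· ∈ E)).card : ℝ)
      ≤ (N:ℝ)^2 * (4 * ((N : ℝ) ^ Mn * Real.exp (-(μc ^ 2 * (Mn:ℝ)) / 8))) := by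
    have hsub : (Finset.univ.filter (· ∈ E))
        ⊆ ((Finset.univ : Finset (Fin N)).offDiag).biUnion (fun p : Fin N × Fin N =>
            Finset.univ.filter (fun r : Fin Mn → Fin N =>
              μc * Mn < ‖∑ i, gfun N (((p.1 : ℕ) : ℤ) - ((p.2 : ℕ) : ℤ)) (r i)‖)) := by
      intro r hr
      rw [Finset.mem_filter] at hr
      obtain ⟨j, j', hjj, h⟩ := (hmem r).1 hr.2
      rw [Finset.mem_biUnion]
      exact ⟨(j, j'), by simp [Finset.mem_offDiag, hjj], by simp [h]⟩
    calc ((Finset.univ.filter (· ∈ E)).card : ℝ)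
        ≤ ((((Finset.univ : Finset (Fin N)).offDiag).biUnion (fun p : Fin N × Fin N =>
            Finset.univ.filter (fun r : Fin Mn → Fin N =>
              μc * Mn < ‖∑ i, gfun N (((p.1 : ℕ) : ℤ) - ((p.2 : ℕ) : ℤ)) (r i)‖))).card : ℝ) := by
          exact_mod_cast Finset.card_le_card hsub
      _ ≤ ∑ p ∈ (Finset.univ : Finset (Fin N)).offDiag, ((Finset.univ.filter (fun r : Fin Mn → Fin N =>
              μc * Mn < ‖∑ i, gfun N (((p.1 : ℕ) : ℤ) - ((p.2 : ℕ) : ℤ)) (r i)‖)).card : ℝ) := by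
          exact_mod_cast Finset.card_biUnion_le
      _ ≤ ∑ _p ∈ (Finset.univ : Finset (Fin N)).offDiag,
            (4 * ((N : ℝ) ^ Mn * Real.exp (-(μc ^ 2 * (Mn:ℝ)) / 8))) := by
          apply Finset.sum_le_sum
          intro p hp
          rw [Finset.mem_offDiag] at hp
          exact pair_count hMn _ (hdvd p.1 p.2 hp.2.2) μc hμ
      _ ≤ (N:ℝ)^2 * (4 * ((N : ℝ) ^ Mn * Real.exp (-(μc ^ 2 * (Mn:ℝ)) / 8))) := by
          rw [Finset.sum_const, nsmul_eq_mul]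
          have hcard : (((Finset.univ : Finset (Fin N)).offDiag).card : ℝ) ≤ (N:ℝ)^2 := by
            have h0 : ((Finset.univ : Finset (Fin N)).offDiag).card
                = N * N - N := by
              rw [Finset.offDiag_card]; simp
            have h1 : ((Finset.univ : Finset (Fin N)).offDiag).card ≤ N * N := by omega
            have h2 : (((Finset.univ : Finset (Fin N)).offDiag).card : ℝ) ≤ (N:ℝ) * N := by
              exact_mod_cast h1
            nlinarith
          have hpos : (0:ℝ) ≤ 4 * ((N : ℝ) ^ Mn * Real.exp (-(μc ^ 2 * (Mn:ℝ)) / 8)) := by positivity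
          exact mul_le_mul_of_nonneg_right hcard hpos
  -- arithmetic : 4 N² exp(-μ²Mn/8) ≤ γ
  have hL : (0:ℝ) < (N:ℝ) / γ := by positivity
  have hL1 : (1:ℝ) ≤ (N:ℝ) / γ := by
    rw [le_div_iff₀ hγ]
    calc (1:ℝ) * γ = γ := one_mul γ
      _ ≤ 1 := hγ1
      _ ≤ N := by exact_mod_cast Nat.one_le_of_lt hN
  have hlogpos : 0 ≤ Real.log ((N:ℝ)/γ) := Real.log_nonneg hL1
  have hmuMn : 64 * Real.log ((N:ℝ)/γ) ≤ μc^2 * Mn := by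
    have h1 : μc^2 * (64 * μc⁻¹ ^ 2 * Real.log ((N : ℝ) / γ)) ≤ μc^2 * Mn :=
      mul_le_mul_of_nonneg_left hbig (by positivity)
    have h2 : μc^2 * (64 * μc⁻¹ ^ 2 * Real.log ((N : ℝ) / γ)) = 64 * Real.log ((N:ℝ)/γ) := by
      field_simp
    linarith
  have hexp : Real.exp (-(μc ^ 2 * (Mn:ℝ)) / 8) ≤ (γ / N)^8 := by
    have : Real.exp (-(μc ^ 2 * (Mn:ℝ)) / 8) ≤ Real.exp (-(8 * Real.log ((N:ℝ)/γ))) := by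
      apply Real.exp_le_exp.2
      linarith
    calc Real.exp (-(μc ^ 2 * (Mn:ℝ)) / 8) ≤ Real.exp (-(8 * Real.log ((N:ℝ)/γ))) := this
      _ = Real.exp (-Real.log ((N:ℝ)/γ)) ^ (8:ℕ) := by
          rw [← Real.exp_nat_mul]; congr 1; push_cast; ring
      _ = (γ / N)^8 := by
          rw [Real.exp_neg, Real.exp_log hL, inv_div]
  have hfinal : (N:ℝ)^2 * (4 * Real.exp (-(μc ^ 2 * (Mn:ℝ)) / 8)) ≤ γ := by
    have hN2 : (2:ℝ) ≤ N := by exact_mod_cast hN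
    have h64 : (64:ℝ) ≤ (N:ℝ)^6 := by
      calc (64:ℝ) = 2^6 := by norm_num
        _ ≤ (N:ℝ)^6 := pow_le_pow_left₀ (by norm_num) hN2 6
    have hgp : (γ/N)^8 = γ^8 / (N:ℝ)^8 := div_pow γ _ 8
    have step : (N:ℝ)^2 * (4 * ((γ/N)^8)) ≤ γ := by
      rw [hgp]
      have key : (N:ℝ)^2 * (4 * (γ^8 / (N:ℝ)^8)) = 4 * γ^8 / (N:ℝ)^6 := by
        field_simp
      rw [key, div_le_iff₀ (by positivity : (0:ℝ) < (N:ℝ)^6)]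
      have hγ8 : γ^8 ≤ γ := by
        calc γ^8 = γ * γ^7 := by ring
          _ ≤ γ * 1 := by
              apply mul_le_mul_of_nonneg_left _ hγ.le
              exact pow_le_one₀ hγ.le hγ1
          _ = γ := mul_one γ
      nlinarith
    calc (N:ℝ)^2 * (4 * Real.exp (-(μc ^ 2 * (Mn:ℝ)) / 8))
        ≤ (N:ℝ)^2 * (4 * ((γ/N)^8)) := by
          apply mul_le_mul_of_nonneg_left _ (by positivity)
          apply mul_le_mul_of_nonneg_left hexp (by norm_num)
      _ ≤ γ := step
  -- put together in ℝ≥0∞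
  have hcR : ((Finset.univ.filter (· ∈ E)).card : ℝ) ≤ γ * (N:ℝ)^Mn := by
    calc ((Finset.univ.filter (· ∈ E)).card : ℝ)
        ≤ (N:ℝ)^2 * (4 * ((N : ℝ) ^ Mn * Real.exp (-(μc ^ 2 * (Mn:ℝ)) / 8))) := hcount
      _ = ((N:ℝ)^2 * (4 * Real.exp (-(μc ^ 2 * (Mn:ℝ)) / 8))) * (N:ℝ)^Mn := by ring
      _ ≤ γ * (N:ℝ)^Mn := by
          apply mul_le_mul_of_nonneg_right hfinal (by positivity)
  calc (Measure.pi fun _ : Fin Mn => (PMF.uniformOfFintype (Fin N)).toMeasure) E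
      ≤ (@Finset.filter _ (· ∈ E) (Classical.decPred _) Finset.univ).card
          * ((N : ℝ≥0∞))⁻¹ ^ Mn := meas_le_card N Mn E
    _ ≤ ENNReal.ofReal γ := by
        have hNnn : ((N : ℝ≥0∞))⁻¹ ^ Mn = ENNReal.ofReal ((N:ℝ)⁻¹ ^ Mn) := by
          rw [ENNReal.ofReal_pow (by positivity), ENNReal.ofReal_inv_of_pos hN0,
            ENNReal.ofReal_natCast]
        have hcc : ((@Finset.filter _ (· ∈ E) (Classical.decPred _) Finset.univ).card : ℝ≥0∞)
            = ENNReal.ofReal ((Finset.univ.filter (· ∈ E)).card : ℝ) := by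
          rw [ENNReal.ofReal_natCast]
          congr!
        rw [hNnn, hcc, ← ENNReal.ofReal_mul (by positivity)]
        apply ENNReal.ofReal_le_ofReal
        rw [inv_pow, ← div_eq_mul_inv, div_le_iff₀ (by positivity)]
        exact hcR


lemma part2 (N Mn t : ℕ) [NeZero N] (hN : 2 ≤ N) (ht : 2 ≤ t) (hMn : 0 < Mn)
    (hbig : 512 * (t : ℝ) ^ 3 * Real.log N ≤ (Mn : ℝ)) :
    (Measure.pi fun _ : Fin Mn => (PMF.uniformOfFintype (Fin N)).toMeasure)
      {r : Fin Mn → Fin N |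
        ¬ ∀ y : Fin N → ℂ, {j | y j ≠ 0}.ncard ≤ t →
          ((1 - (1 : ℝ) / 2) * ∑ j : Fin N, ‖y j‖ ^ 2 ≤
            ∑ i : Fin Mn, ‖∑ j : Fin N,
              (Complex.exp (-(2 * Real.pi * Complex.I) * ((r i : ℕ) * (j : ℕ)) / N) /
                (Real.sqrt Mn : ℂ)) * y j‖ ^ 2 ∧
          ∑ i : Fin Mn, ‖∑ j : Fin N,
              (Complex.exp (-(2 * Real.pi * Complex.I) * ((r i : ℕ) * (j : ℕ)) / N) /
                (Real.sqrt Mn : ℂ)) * y j‖ ^ 2 ≤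
            (1 + (1 : ℝ) / 2) * ∑ j : Fin N, ‖y j‖ ^ 2)}
      ≤ ENNReal.ofReal (1 / (N : ℝ) ^ t) := by
  have hNR : (2:ℝ) ≤ N := by exact_mod_cast hN
  have hN0 : (0:ℝ) < N := by linarith
  have htR : (2:ℝ) ≤ t := by exact_mod_cast ht
  have ht0 : (0:ℝ) < t := by linarith
  set μc : ℝ := (2 * (t:ℝ))⁻¹ with hμc
  set γ : ℝ := 1 / (N : ℝ) ^ t with hγdef
  have hμ : 0 < μc := by rw [hμc]; positivity
  have hμ1 : μc ≤ 1 := by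
    rw [hμc]
    rw [inv_le_one_iff₀]
    right; linarith
  have hγ : 0 < γ := by rw [hγdef]; positivity
  have hγ1 : γ ≤ 1 := by
    rw [hγdef, div_le_one (by positivity)]
    exact one_le_pow₀ (by linarith)
  have hlogN : 0 ≤ Real.log N := Real.log_nonneg (by linarith)
  have hbig' : 64 * μc⁻¹ ^ 2 * Real.log ((N : ℝ) / γ) ≤ (Mn : ℝ) := by
    have hinv : μc⁻¹ = 2 * t := by rw [hμc, inv_inv]
    have hdiv : (N:ℝ) / γ = (N:ℝ) ^ (t + 1) := by
      rw [hγdef]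
      field_simp
      rw [pow_succ]
      ring
    rw [hinv, hdiv, Real.log_pow]
    have : 64 * (2 * (t:ℝ)) ^ 2 * ((t + 1 : ℕ) * Real.log N)
        = 256 * (t:ℝ)^2 * ((t:ℝ) + 1) * Real.log N := by push_cast; ring
    rw [this]
    have h1 : 256 * (t:ℝ)^2 * ((t:ℝ) + 1) ≤ 512 * (t:ℝ)^3 := by nlinarith
    calc 256 * (t:ℝ)^2 * ((t:ℝ) + 1) * Real.log N
        ≤ 512 * (t:ℝ)^3 * Real.log N := mul_le_mul_of_nonneg_right h1 hlogN
      _ ≤ (Mn : ℝ) := hbig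
  have hsub : {r : Fin Mn → Fin N |
        ¬ ∀ y : Fin N → ℂ, {j | y j ≠ 0}.ncard ≤ t →
          ((1 - (1 : ℝ) / 2) * ∑ j : Fin N, ‖y j‖ ^ 2 ≤
            ∑ i : Fin Mn, ‖∑ j : Fin N,
              (Complex.exp (-(2 * Real.pi * Complex.I) * ((r i : ℕ) * (j : ℕ)) / N) /
                (Real.sqrt Mn : ℂ)) * y j‖ ^ 2 ∧
          ∑ i : Fin Mn, ‖∑ j : Fin N,
              (Complex.exp (-(2 * Real.pi * Complex.I) * ((r i : ℕ) * (j : ℕ)) / N) /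
                (Real.sqrt Mn : ℂ)) * y j‖ ^ 2 ≤
            (1 + (1 : ℝ) / 2) * ∑ j : Fin N, ‖y j‖ ^ 2)}
      ⊆ {r : Fin Mn → Fin N | ∃ j j' : Fin N, j ≠ j' ∧
        μc < ‖∑ i : Fin Mn,
          (starRingEnd ℂ)
              (Complex.exp (-(2 * Real.pi * Complex.I) * ((r i : ℕ) * (j : ℕ)) / N) /
                (Real.sqrt Mn : ℂ)) *
            (Complex.exp (-(2 * Real.pi * Complex.I) * ((r i : ℕ) * (j' : ℕ)) / N) /
              (Real.sqrt Mn : ℂ))‖} := by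
    intro r hr
    simp only [Set.mem_setOf_eq] at hr ⊢
    by_contra hcon
    push_neg at hcon
    apply hr
    intro y hy
    have hcoh : ∀ j j' : Fin N, j ≠ j' →
        ‖∑ i, (starRingEnd ℂ) (efun N Mn r j i) * efun N Mn r j' i‖ ≤ μc := by
      intro j j' hjj
      exact hcon j j' hjj
    have hμt : μc * t ≤ 1 / 2 := by
      rw [hμc]
      rw [inv_mul_eq_div, div_le_div_iff₀ (by positivity) (by norm_num)]
      ring_nf
      linarith
    exact rip_det N Mn t hMn r μc hμ.le hcoh hμt y hy
  calc (Measure.pi fun _ : Fin Mn => (PMF.uniformOfFintype (Fin N)).toMeasure)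
        {r : Fin Mn → Fin N |
        ¬ ∀ y : Fin N → ℂ, {j | y j ≠ 0}.ncard ≤ t →
          ((1 - (1 : ℝ) / 2) * ∑ j : Fin N, ‖y j‖ ^ 2 ≤
            ∑ i : Fin Mn, ‖∑ j : Fin N,
              (Complex.exp (-(2 * Real.pi * Complex.I) * ((r i : ℕ) * (j : ℕ)) / N) /
                (Real.sqrt Mn : ℂ)) * y j‖ ^ 2 ∧
          ∑ i : Fin Mn, ‖∑ j : Fin N,
              (Complex.exp (-(2 * Real.pi * Complex.I) * ((r i : ℕ) * (j : ℕ)) / N) /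
                (Real.sqrt Mn : ℂ)) * y j‖ ^ 2 ≤
            (1 + (1 : ℝ) / 2) * ∑ j : Fin N, ‖y j‖ ^ 2)}
      ≤ (Measure.pi fun _ : Fin Mn => (PMF.uniformOfFintype (Fin N)).toMeasure)
        {r : Fin Mn → Fin N | ∃ j j' : Fin N, j ≠ j' ∧
          μc < ‖∑ i : Fin Mn,
            (starRingEnd ℂ)
                (Complex.exp (-(2 * Real.pi * Complex.I) * ((r i : ℕ) * (j : ℕ)) / N) /
                  (Real.sqrt Mn : ℂ)) *
              (Complex.exp (-(2 * Real.pi * Complex.I) * ((r i : ℕ) * (j' : ℕ)) / N) /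
                (Real.sqrt Mn : ℂ))‖} := measure_mono hsub
    _ ≤ ENNReal.ofReal γ := part1 N Mn μc γ hN hMn hμ hμ1 hγ hγ1 hbig'
    _ = ENNReal.ofReal (1 / (N : ℝ) ^ t) := by rw [hγdef]



/-- Let `A` be the `Mn × N` matrix whose rows are chosen uniformly at
random from the rows of the `N × N` Fourier matrix, with columns normalized by `1/√Mn`
so they have unit norm.  (1) There is a constant `b` such that if
`Mn ≥ b·μ⁻²·log(N/γ)`, then with probability at least `1 − γ` the coherence of `A` is
at most `μ`.  (2) Consequently, there is a constant `b` such that for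
`Mn ≥ b·t³·log N` the matrix `A` satisfies the RIP of order `t` with constant `1/2`
with probability at least `1 − 1/N^t`. -/
theorem stmt17 :
    (∃ b : ℝ, 0 < b ∧
      ∀ (N Mn : ℕ) [NeZero N] (μc γ : ℝ), 2 ≤ N → 0 < Mn → 0 < μc → μc ≤ 1 →
        0 < γ → γ ≤ 1 →
        b * μc⁻¹ ^ 2 * Real.log ((N : ℝ) / γ) ≤ (Mn : ℝ) →
        (Measure.pi fun _ : Fin Mn => (PMF.uniformOfFintype (Fin N)).toMeasure)
          {r : Fin Mn → Fin N | ∃ j j' : Fin N, j ≠ j' ∧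
            μc < ‖∑ i : Fin Mn,
              (starRingEnd ℂ)
                  (Complex.exp (-(2 * Real.pi * Complex.I) * ((r i : ℕ) * (j : ℕ)) / N) /
                    (Real.sqrt Mn : ℂ)) *
                (Complex.exp (-(2 * Real.pi * Complex.I) * ((r i : ℕ) * (j' : ℕ)) / N) /
                  (Real.sqrt Mn : ℂ))‖}
          ≤ ENNReal.ofReal γ) ∧
    (∃ b : ℝ, 0 < b ∧
      ∀ (N Mn t : ℕ) [NeZero N], 2 ≤ N → 2 ≤ t → 0 < Mn →
        b * (t : ℝ) ^ 3 * Real.log N ≤ (Mn : ℝ) →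
        (Measure.pi fun _ : Fin Mn => (PMF.uniformOfFintype (Fin N)).toMeasure)
          {r : Fin Mn → Fin N |
            ¬ ∀ y : Fin N → ℂ, {j | y j ≠ 0}.ncard ≤ t →
              ((1 - (1 : ℝ) / 2) * ∑ j : Fin N, ‖y j‖ ^ 2 ≤
                ∑ i : Fin Mn, ‖∑ j : Fin N,
                  (Complex.exp (-(2 * Real.pi * Complex.I) * ((r i : ℕ) * (j : ℕ)) / N) /
                    (Real.sqrt Mn : ℂ)) * y j‖ ^ 2 ∧
              ∑ i : Fin Mn, ‖∑ j : Fin N,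
                  (Complex.exp (-(2 * Real.pi * Complex.I) * ((r i : ℕ) * (j : ℕ)) / N) /
                    (Real.sqrt Mn : ℂ)) * y j‖ ^ 2 ≤
                (1 + (1 : ℝ) / 2) * ∑ j : Fin N, ‖y j‖ ^ 2)}
          ≤ ENNReal.ofReal (1 / (N : ℝ) ^ t)) := by
  constructor
  · exact ⟨64, by norm_num, fun N Mn _ μc γ hN hMn hμ hμ1 hγ hγ1 hbig =>
      part1 N Mn μc γ hN hMn hμ hμ1 hγ hγ1 hbig⟩
  · exact ⟨512, by norm_num, fun N Mn t _ hN ht hMn hbig =>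
      part2 N Mn t hN ht hMn hbig⟩
end

section
/- Let y = y_head + y_residue + y_gauss ∈ ℂ^{√n} where supp(y_head) = {i} with |y_head_i| ≥ L, ‖y_residue‖₁ < εL, and y_gauss ~ N_ℂ(0, σ²I_{√n}) with σ = εL/n^{1/4}. Then with probability at least 1 − e^{−Ω(√n)}, ‖y_{−i}‖₂² ≤ O(ε²L²) < L² ≤ |y_i|², where y_{−i} denotes y with coordinate i removed. -/
open MeasureTheory ProbabilityTheory
open scoped ENNReal
set_option maxHeartbeats 1000000

open Real
theorem lintegral_pi_pow {E : Type*} [MeasurableSpace E] (μ : Measure E) [SigmaFinite μ]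
    (f : E → ℝ≥0∞) (hf : Measurable f) (n : ℕ) :
    ∫⁻ x : Fin n → E, ∏ i, f (x i) ∂Measure.pi (fun _ => μ) = (∫⁻ x, f x ∂μ) ^ n := by
  induction n with
  | zero => simp [Measure.pi_univ]
  | succ n ih =>
    have hmeas : Measurable fun p : E × (Fin n → E) => f p.1 * ∏ i, f (p.2 i) :=
      (hf.comp measurable_fst).mul
        (Finset.measurable_prod _ fun i _ => hf.comp ((measurable_pi_apply i).comp measurable_snd))
    have h := measurePreserving_piFinSuccAbove (fun _ : Fin (n+1) => μ) 0
    have key : (∫⁻ x : Fin (n+1) → E, ∏ i, f (x i) ∂Measure.pi (fun _ => μ)) =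
        ∫⁻ p : E × (Fin n → E), f p.1 * ∏ i, f (p.2 i)
          ∂(μ.prod (Measure.pi fun _ => μ)) := by
      rw [← h.lintegral_comp hmeas]
      refine lintegral_congr fun x => ?_
      simp [MeasurableEquiv.piFinSuccAbove_apply, Fin.prod_univ_succ, Fin.removeNth,
        Fin.zero_succAbove, Fin.tail]
    rw [key]
    have := lintegral_prod_mul (μ := μ) (ν := Measure.pi fun _ : Fin n => μ)
      hf.aemeasurable
      (Finset.measurable_prod Finset.univ
        (fun i _ => hf.comp (measurable_pi_apply i)) : Measurable
          fun y : Fin n → E => ∏ i, f (y i)).aemeasurable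
    rw [this, ih, pow_succ']

theorem lintegral_gauss_exp {s : ℝ} (hs : 0 < s) :
    ∫⁻ x, ENNReal.ofReal (Real.exp (x ^ 2 / (4 * s))) ∂gaussianReal 0 s.toNNReal
      = ENNReal.ofReal (Real.sqrt 2) := by
  have hv : s.toNNReal ≠ 0 := by simp [Real.toNNReal_eq_zero, not_le, hs]
  have hcv : ((s.toNNReal : NNReal) : ℝ) = s := Real.coe_toNNReal _ hs.le
  rw [gaussianReal_of_var_ne_zero _ hv,
    lintegral_withDensity_eq_lintegral_mul _ (measurable_gaussianPDF _ _)
      (by fun_prop : Measurable fun x : ℝ => ENNReal.ofReal (rexp (x ^ 2 / (4 * s))))]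
  have hpt : ∀ x : ℝ, (gaussianPDF 0 s.toNNReal * fun x => ENNReal.ofReal (rexp (x ^ 2 / (4 * s)))) x
      = ENNReal.ofReal ((√(2 * π * s))⁻¹ * rexp (-(1 / (4 * s)) * x ^ 2)) := by
    intro x
    simp only [Pi.mul_apply, gaussianPDF, gaussianPDFReal, ← ENNReal.ofReal_mul
      (by positivity : (0:ℝ) ≤ (√(2 * π * (s.toNNReal:ℝ)))⁻¹ * rexp (-(x - 0)^2 / (2 * (s.toNNReal:ℝ))))]
    rw [hcv]
    congr 1
    rw [mul_assoc, ← Real.exp_add]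
    congr 2
    field_simp
    ring
  simp_rw [hpt]
  rw [← ofReal_integral_eq_lintegral_ofReal
    (((integrable_exp_neg_mul_sq (by positivity : (0:ℝ) < 1 / (4 * s))).const_mul _))
    (Filter.Eventually.of_forall fun x => by positivity)]
  congr 1
  rw [MeasureTheory.integral_const_mul, integral_gaussian]
  have h1 : π / (1 / (4 * s)) = 2 * (2 * π * s) := by field_simp; ring
  rw [h1, Real.sqrt_mul (by norm_num) (2 * π * s)]
  have h2 : √(2 * π * s) ≠ 0 := by positivity
  field_simp

/-- Let `y = y_head + y_residue + y_gauss ∈ ℂ^m` (`m = √n`), where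
`supp(y_head) = {i}` with `|y_head i| ≥ L`, `‖y_residue‖₁ < εL`, and `y_gauss` is complex
Gaussian with standard deviation `σ = εL/n^{1/4} = εL/√m` in each of the real and
imaginary parts of each coordinate.  Then (for some absolute constants `C, c₁` and all
sufficiently small `ε ≤ ε₀`), with probability at least `1 − e^{−c₁·m}`,
`‖y₋ᵢ‖₂² ≤ C·ε²L² < L² ≤ |y_head i|²`. -/
theorem stmt18 :
    ∃ Cc c₁ ε₀ : ℝ, 0 < Cc ∧ 0 < c₁ ∧ 0 < ε₀ ∧
      ∀ (m : ℕ) (L ε σ : ℝ) (i : Fin m) (yh yr : Fin m → ℂ),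
        0 < m → 0 < L → 0 < ε → ε ≤ ε₀ →
        σ = ε * L / Real.sqrt m →
        (∀ j, j ≠ i → yh j = 0) → L ≤ ‖yh i‖ →
        (∑ j, ‖yr j‖) < ε * L →
        ENNReal.ofReal (1 - Real.exp (-(c₁ * m))) ≤
          (Measure.pi fun _ : Fin m =>
              (gaussianReal 0 (Real.toNNReal (σ ^ 2))).prod
                (gaussianReal 0 (Real.toNNReal (σ ^ 2))))
            {g : Fin m → ℝ × ℝ |
              (∑ j ∈ Finset.univ.erase i,
                  ‖yh j + yr j + (((g j).1 : ℂ) + ((g j).2 : ℂ) * Complex.I)‖ ^ 2)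
                    ≤ Cc * ε ^ 2 * L ^ 2 ∧
              Cc * ε ^ 2 * L ^ 2 < L ^ 2 ∧
              L ^ 2 ≤ ‖yh i‖ ^ 2} := by
  refine ⟨18, 1, 1/5, by norm_num, one_pos, by norm_num, ?_⟩
  intro m L ε σ i yh yr hm hL hε hε₀ hσ hyh hyhi hyr
  have hm' : (0:ℝ) < m := Nat.cast_pos.mpr hm
  have hσpos : 0 < σ := by
    rw [hσ]; positivity
  set s : ℝ := σ ^ 2 with hsdef
  have hs : 0 < s := by positivity
  have hseq : s = ε ^ 2 * L ^ 2 / m := by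
    rw [hsdef, hσ, div_pow, Real.sq_sqrt hm'.le]; ring
  set ν : Measure (ℝ × ℝ) := (gaussianReal 0 s.toNNReal).prod (gaussianReal 0 s.toNNReal) with hν
  set μ := Measure.pi (fun _ : Fin m => ν) with hμ
  haveI : IsProbabilityMeasure μ := by rw [hμ]; infer_instance
  -- the quadratic functional
  set S : (Fin m → ℝ × ℝ) → ℝ := fun g => ∑ j, ((g j).1 ^ 2 + (g j).2 ^ 2) with hSdef
  have hSmeas : Measurable S := Finset.measurable_sum _ fun j _ => by fun_prop
  set A : Set (Fin m → ℝ × ℝ) := {g | 8 * ε ^ 2 * L ^ 2 < S g} with hA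
  have hAmeas : MeasurableSet A := measurableSet_lt measurable_const hSmeas
  -- the Chernoff function
  set f : ℝ → ℝ≥0∞ := fun x => ENNReal.ofReal (rexp (x ^ 2 / (4 * s))) with hfdef
  have hfmeas : Measurable f := by rw [hfdef]; fun_prop
  set h : ℝ × ℝ → ℝ≥0∞ := fun p => f p.1 * f p.2 with hhdef
  have hhmeas : Measurable h := (hfmeas.comp measurable_fst).mul (hfmeas.comp measurable_snd)
  set F : (Fin m → ℝ × ℝ) → ℝ≥0∞ := fun g => ∏ j, h (g j) with hFdef
  have hFmeas : Measurable F :=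
    Finset.measurable_prod _ fun j _ => hhmeas.comp (measurable_pi_apply j)
  have hFeq : ∀ g, F g = ENNReal.ofReal (rexp (S g / (4 * s))) := by
    intro g
    calc F g = ∏ j, ENNReal.ofReal (rexp ((g j).1 ^ 2 / (4*s)) * rexp ((g j).2 ^ 2 / (4*s))) := by
          refine Finset.prod_congr rfl fun j _ => ?_
          rw [ENNReal.ofReal_mul (Real.exp_nonneg _)]
      _ = ENNReal.ofReal (∏ j, (rexp ((g j).1 ^ 2 / (4*s)) * rexp ((g j).2 ^ 2 / (4*s)))) :=
          (ENNReal.ofReal_prod_of_nonneg (fun j _ => by positivity)).symm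
      _ = ENNReal.ofReal (rexp (S g / (4 * s))) := by
          congr 1
          rw [hSdef, Finset.sum_div, Real.exp_sum]
          exact (Finset.prod_congr rfl fun j _ => by rw [add_div, Real.exp_add]).symm
  have hνint : ∫⁻ p, h p ∂ν = ENNReal.ofReal 2 := by
    rw [hν, hhdef]
    rw [lintegral_prod_mul hfmeas.aemeasurable hfmeas.aemeasurable]
    rw [hfdef]
    rw [lintegral_gauss_exp hs, ← ENNReal.ofReal_mul (Real.sqrt_nonneg 2),
      Real.mul_self_sqrt (by norm_num)]
  have hFint : ∫⁻ g, F g ∂μ = ENNReal.ofReal 2 ^ m := by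
    rw [hμ, hFdef, lintegral_pi_pow ν h hhmeas m, hνint]
  set c : ℝ≥0∞ := ENNReal.ofReal (rexp (2 * m)) with hc
  have hsub : A ⊆ {g | c ≤ F g} := by
    intro g hg
    rw [Set.mem_setOf_eq, hFeq g, hc]
    apply ENNReal.ofReal_le_ofReal
    apply Real.exp_le_exp.mpr
    rw [le_div_iff₀ (by positivity : (0:ℝ) < 4 * s)]
    have h48 : 2 * (m:ℝ) * (4 * s) = 8 * ε ^ 2 * L ^ 2 := by
      rw [hseq]; field_simp; ring
    rw [h48]
    exact le_of_lt hg
  have hμA : μ A ≤ ENNReal.ofReal (rexp (-(1 * m))) := by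
    have h1 : μ A * c ≤ ENNReal.ofReal 2 ^ m := by
      rw [mul_comm]
      calc c * μ A ≤ c * μ {g | c ≤ F g} := mul_le_mul_right (measure_mono hsub) c
        _ ≤ ∫⁻ g, F g ∂μ := mul_meas_ge_le_lintegral₀ hFmeas.aemeasurable c
        _ = ENNReal.ofReal 2 ^ m := hFint
    have hc0 : c ≠ 0 := by
      simp [hc, ENNReal.ofReal_eq_zero, not_le, Real.exp_pos]
    have hct : c ≠ ⊤ := ENNReal.ofReal_ne_top
    have h2 : μ A ≤ ENNReal.ofReal 2 ^ m / c :=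
      (ENNReal.le_div_iff_mul_le (Or.inl hc0) (Or.inl hct)).mpr h1
    refine h2.trans ?_
    rw [hc, ← ENNReal.ofReal_pow (by norm_num : (0:ℝ) ≤ 2),
      ← ENNReal.ofReal_div_of_pos (Real.exp_pos _)]
    apply ENNReal.ofReal_le_ofReal
    rw [div_le_iff₀ (Real.exp_pos _)]
    have he : rexp (-(1 * ↑m)) * rexp (2 * ↑m) = rexp (↑m * 1) := by
      rw [← Real.exp_add]; ring_nf
    rw [he, Real.exp_nat_mul]
    exact pow_le_pow_left₀ (by norm_num)
      (le_of_lt (lt_trans (by norm_num) Real.exp_one_gt_d9)) m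
  have hcompl : ENNReal.ofReal (1 - rexp (-(1 * m))) ≤ μ Aᶜ := by
    rw [prob_compl_eq_one_sub hAmeas,
      ENNReal.ofReal_sub _ (Real.exp_nonneg _), ENNReal.ofReal_one]
    exact tsub_le_tsub_left hμA 1
  refine hcompl.trans (measure_mono ?_)
  intro g hg
  have hSg : S g ≤ 8 * ε ^ 2 * L ^ 2 := not_lt.mp hg
  have habs2 : ∀ j, ‖((g j).1 : ℂ) + ((g j).2 : ℂ) * Complex.I‖ ^ 2
      = (g j).1 ^ 2 + (g j).2 ^ 2 := by
    intro j
    rw [Complex.sq_norm, Complex.normSq_add_mul_I]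
  set T : ℝ := ∑ j, ‖yr j‖ with hT
  have hT0 : 0 ≤ T := Finset.sum_nonneg fun j _ => norm_nonneg _
  have hTj : ∀ j : Fin m, ‖yr j‖ ≤ T :=
    fun j => Finset.single_le_sum (fun k _ => norm_nonneg _) (Finset.mem_univ j)
  have key : ∀ j ∈ Finset.univ.erase i,
      ‖yh j + yr j + (((g j).1 : ℂ) + ((g j).2 : ℂ) * Complex.I)‖ ^ 2
        ≤ 2 * (‖yr j‖ * T) + 2 * ((g j).1 ^ 2 + (g j).2 ^ 2) := by
    intro j hj
    rw [hyh j (Finset.ne_of_mem_erase hj), zero_add]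
    have htri := norm_add_le (yr j) (((g j).1 : ℂ) + ((g j).2 : ℂ) * Complex.I)
    have hb2 := habs2 j
    have ha0 := norm_nonneg (yr j)
    have hb0 := norm_nonneg (((g j).1 : ℂ) + ((g j).2 : ℂ) * Complex.I)
    have hs0 := norm_nonneg (yr j + (((g j).1 : ℂ) + ((g j).2 : ℂ) * Complex.I))
    have h1 : ‖yr j + (((g j).1 : ℂ) + ((g j).2 : ℂ) * Complex.I)‖ ^ 2
        ≤ (‖yr j‖
            + ‖((g j).1 : ℂ) + ((g j).2 : ℂ) * Complex.I‖) ^ 2 :=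
      pow_le_pow_left₀ hs0 htri 2
    set a := ‖yr j‖ with ha
    set b := ‖((g j).1 : ℂ) + ((g j).2 : ℂ) * Complex.I‖ with hb
    clear_value a b
    clear htri
    nlinarith [hTj j, sq_nonneg (a - b), hb2, h1, ha0, hb0]
  have hsum1 : (∑ j ∈ Finset.univ.erase i,
      ‖yh j + yr j + (((g j).1 : ℂ) + ((g j).2 : ℂ) * Complex.I)‖ ^ 2)
        ≤ 2 * T * T + 2 * S g := by
    calc (∑ j ∈ Finset.univ.erase i,
        ‖yh j + yr j + (((g j).1 : ℂ) + ((g j).2 : ℂ) * Complex.I)‖ ^ 2)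
        ≤ ∑ j ∈ Finset.univ.erase i,
            (2 * (‖yr j‖ * T) + 2 * ((g j).1 ^ 2 + (g j).2 ^ 2)) :=
          Finset.sum_le_sum key
      _ ≤ ∑ j, (2 * (‖yr j‖ * T) + 2 * ((g j).1 ^ 2 + (g j).2 ^ 2)) := by
          refine Finset.sum_le_sum_of_subset_of_nonneg (Finset.erase_subset i Finset.univ)
            fun j _ _ => ?_
          have := norm_nonneg (yr j)
          positivity
      _ = 2 * T * T + 2 * S g := by
          rw [Finset.sum_add_distrib, hSdef, ← Finset.mul_sum, ← Finset.mul_sum,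
            ← Finset.sum_mul, ← hT]
          ring
  refine ⟨?_, ?_, ?_⟩
  · have hTεL : T * T ≤ (ε * L) * (ε * L) := by nlinarith [hyr]
    have : (2:ℝ) * T * T + 2 * S g ≤ 18 * ε ^ 2 * L ^ 2 := by nlinarith
    linarith
  · have hε2 : ε ^ 2 ≤ (1/5) ^ 2 := pow_le_pow_left₀ hε.le hε₀ 2
    nlinarith [pow_pos hL 2]
  · exact pow_le_pow_left₀ hL.le hyhi 2
end
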